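/- For the fuzzy sphere: let S^1, S^2, S^3 be hermitian N×N matrices with [S^j, S^k] = i ε^{jk}_l S^l and (S^1)² + (S^2)² + (S^3)² = ((N²−1)/4)·1, set ℏ = 2/√(N²−1) and X^i = ℏ S^i. Then −ℏ^{-2} ∑_{1≤i<j≤3} [X^i, X^j]² = 1_N, and consequently the discrete Euler characteristic χ̂_N = ℏ Tr(1_N) = 2N/√(N²−1) converges to 2 as N → ∞. -/

import Mathlib

open scoped BigOperators Topology

/-- The totally antisymmetric Levi-Civita symbol. -/
noncomputable def leviCivita {n : ℕ} (σ : Fin n → Fin n) : ℝ :=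
  if h : Function.Bijective σ then ((Equiv.Perm.sign (Equiv.ofBijective σ h) : ℤ) : ℝ) else 0

lemma lc_zero (σ : Fin 3 → Fin 3) (h : ¬ Function.Bijective σ) : leviCivita σ = 0 :=
  dif_neg h

lemma lc_pos (σ : Fin 3 → Fin 3) (p : Equiv.Perm (Fin 3))
    (hp : ∀ x, σ x = p x) (hs : Equiv.Perm.sign p = 1) : leviCivita σ = 1 := by
  have hσ : σ = ⇑p := funext hp
  have hb : Function.Bijective σ := hσ ▸ p.bijective
  rw [leviCivita, dif_pos hb]
  have : Equiv.ofBijective σ hb = p := Equiv.ext hp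
  rw [this, hs]; norm_num

def p120 : Equiv.Perm (Fin 3) := ⟨![1,2,0], ![2,0,1], by decide, by decide⟩
def p201 : Equiv.Perm (Fin 3) := ⟨![2,0,1], ![1,2,0], by decide, by decide⟩

lemma lc012 : leviCivita ![(0:Fin 3),1,2] = 1 :=
  lc_pos _ (Equiv.refl _) (by decide) (by decide)
lemma lc120 : leviCivita ![(1:Fin 3),2,0] = 1 :=
  lc_pos _ p120 (by decide) (by decide)
lemma lc201 : leviCivita ![(2:Fin 3),0,1] = 1 :=
  lc_pos _ p201 (by decide) (by decide)

lemma euler_tendsto :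
    Filter.Tendsto (fun M : ℕ => 2 * (M : ℝ) / Real.sqrt ((M : ℝ) ^ 2 - 1))
      Filter.atTop (𝓝 2) := by
  have h1 : Filter.Tendsto (fun M : ℕ => 1 - 1 / (M : ℝ) ^ 2) Filter.atTop (𝓝 1) := by
    have h0 : Filter.Tendsto (fun M : ℕ => 1 / (M : ℝ) ^ 2) Filter.atTop (𝓝 0) := by
      simp only [one_div]
      exact ((Filter.tendsto_pow_atTop (two_ne_zero)).comp
        (tendsto_natCast_atTop_atTop (R := ℝ))).inv_tendsto_atTop
    simpa using (tendsto_const_nhds (x := (1:ℝ))).sub h0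
  have h2 : Filter.Tendsto (fun M : ℕ => Real.sqrt (1 - 1 / (M : ℝ) ^ 2))
      Filter.atTop (𝓝 1) := by
    have := (Real.continuous_sqrt.tendsto 1).comp h1
    simpa [Function.comp_def] using this
  have h3 : Filter.Tendsto (fun M : ℕ => 2 / Real.sqrt (1 - 1 / (M : ℝ) ^ 2))
      Filter.atTop (𝓝 2) := by
    simpa [Pi.div_def] using (tendsto_const_nhds (x := (2:ℝ))).div h2 one_ne_zero
  refine h3.congr' ?_
  filter_upwards [Filter.eventually_ge_atTop 2] with M hM
  have hM1 : (1:ℝ) < (M:ℝ) := by exact_mod_cast hM.trans_lt' one_lt_two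
  have hMpos : (0:ℝ) < (M:ℝ) := lt_trans one_pos hM1
  have hfac : (M:ℝ) ^ 2 - 1 = (M:ℝ) ^ 2 * (1 - 1 / (M : ℝ) ^ 2) := by
    field_simp
  rw [hfac, Real.sqrt_mul (by positivity), Real.sqrt_sq hMpos.le]
  have hs : (0:ℝ) < Real.sqrt (1 - 1 / (M:ℝ)^2) := by
    apply Real.sqrt_pos.mpr
    have : 1 / (M:ℝ)^2 < 1 := by
      rw [div_lt_one (by positivity)]
      nlinarith
    linarith
  field_simp

/-- The round fuzzy sphere: for an `su(2)` representation `S¹,S²,S³` with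
Casimir `(N²−1)/4` and `ℏ = 2/√(N²−1)`, `Xⁱ = ℏSⁱ`, one has
`−ℏ⁻² ∑_{i<j} [Xⁱ,Xʲ]² = 1`, and the discrete Euler characteristic
`χ̂_N = ℏ Tr(1) = 2N/√(N²−1)` converges to `2`. -/
theorem fuzzy_sphere_discrete_euler_characteristic
    (N : ℕ) (hN : 1 < N)
    (S : Fin 3 → Matrix (Fin N) (Fin N) ℂ)
    (hherm : ∀ i, (S i).IsHermitian)
    (hcomm : ∀ j k : Fin 3,
      S j * S k - S k * S j =
        Complex.I • ∑ l, (leviCivita ![j, k, l] : ℂ) • S l)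
    (hcas : S 0 * S 0 + S 1 * S 1 + S 2 * S 2 =
      ((((N : ℂ) ^ 2 - 1) / 4)) • (1 : Matrix (Fin N) (Fin N) ℂ)) :
    (-((((2 / Real.sqrt ((N : ℝ) ^ 2 - 1) : ℝ) : ℂ) ^ 2)⁻¹) •
        ∑ i : Fin 3, ∑ j : Fin 3,
          (if i < j then
            ((2 / Real.sqrt ((N : ℝ) ^ 2 - 1) : ℝ) • S i *
                ((2 / Real.sqrt ((N : ℝ) ^ 2 - 1) : ℝ) • S j) -
              (2 / Real.sqrt ((N : ℝ) ^ 2 - 1) : ℝ) • S j *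
                ((2 / Real.sqrt ((N : ℝ) ^ 2 - 1) : ℝ) • S i)) ^ 2
          else 0) = (1 : Matrix (Fin N) (Fin N) ℂ)) ∧
    ((2 / Real.sqrt ((N : ℝ) ^ 2 - 1)) *
        (Matrix.trace (1 : Matrix (Fin N) (Fin N) ℂ)).re =
      2 * (N : ℝ) / Real.sqrt ((N : ℝ) ^ 2 - 1)) ∧
    Filter.Tendsto (fun M : ℕ => 2 * (M : ℝ) / Real.sqrt ((M : ℝ) ^ 2 - 1))
      Filter.atTop (𝓝 2) := by
  have hNR : (1:ℝ) < (N:ℝ) := by exact_mod_cast hN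
  have hpos : (0:ℝ) < (N:ℝ)^2 - 1 := by nlinarith
  set r : ℝ := 2 / Real.sqrt ((N : ℝ) ^ 2 - 1) with hr
  set c : ℂ := ((r : ℝ) : ℂ) with hc
  have hd : ((N:ℂ)^2 - 1) ≠ 0 := by
    have : (((N:ℝ)^2 - 1 : ℝ) : ℂ) ≠ 0 := Complex.ofReal_ne_zero.mpr hpos.ne'
    push_cast at this
    exact this
  have hr2 : c ^ 2 = 4 / ((N:ℂ)^2 - 1) := by
    have hs : ((Real.sqrt ((N:ℝ)^2 - 1) : ℝ) : ℂ)^2 = ((N:ℂ)^2 - 1) := by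
      rw [← Complex.ofReal_pow, Real.sq_sqrt hpos.le]
      push_cast; ring
    rw [hc, hr]
    push_cast
    rw [div_pow, hs]
    norm_num
  refine ⟨?_, ?_, euler_tendsto⟩
  · -- part 1
    have hsm : ∀ (M : Matrix (Fin N) (Fin N) ℂ), r • M = c • M := fun M => by
      ext i j; simp [Matrix.smul_apply, Complex.real_smul, hc]
    have c01 : S 0 * S 1 - S 1 * S 0 = Complex.I • S 2 := by
      have h := hcomm 0 1
      rw [Fin.sum_univ_three] at h
      rw [h, lc012, lc_zero ![0,1,0] (by decide), lc_zero ![0,1,1] (by decide)]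
      norm_num
    have c12 : S 1 * S 2 - S 2 * S 1 = Complex.I • S 0 := by
      have h := hcomm 1 2
      rw [Fin.sum_univ_three] at h
      rw [h, lc120, lc_zero ![1,2,1] (by decide), lc_zero ![1,2,2] (by decide)]
      norm_num
    have c20 : S 2 * S 0 - S 0 * S 2 = Complex.I • S 1 := by
      have h := hcomm 2 0
      rw [Fin.sum_univ_three] at h
      rw [h, lc201, lc_zero ![2,0,0] (by decide), lc_zero ![2,0,2] (by decide)]
      norm_num
    have c02 : S 0 * S 2 - S 2 * S 0 = -(Complex.I • S 1) := by
      rw [← c20]; abel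
    have hsq : ∀ k : Fin 3, (Complex.I • S k)^2 = -(S k * S k) := fun k => by
      rw [sq, smul_mul_smul_comm, Complex.I_mul_I, neg_smul, one_smul]
    simp only [Fin.sum_univ_three,
      eq_true (show (0:Fin 3) < 1 by decide), eq_true (show (0:Fin 3) < 2 by decide),
      eq_true (show (1:Fin 3) < 2 by decide),
      eq_false (show ¬((0:Fin 3) < 0) by decide), eq_false (show ¬((1:Fin 3) < 0) by decide),
      eq_false (show ¬((1:Fin 3) < 1) by decide), eq_false (show ¬((2:Fin 3) < 0) by decide),
      eq_false (show ¬((2:Fin 3) < 1) by decide), eq_false (show ¬((2:Fin 3) < 2) by decide),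
      if_true, if_false, add_zero, zero_add]
    simp only [hsm, smul_mul_smul_comm, ← smul_sub]
    rw [c01, c02, c12]
    simp only [smul_pow, neg_sq, hsq]
    rw [← smul_add, ← smul_add,
      show (-(S 2 * S 2) + -(S 1 * S 1) + -(S 0 * S 0))
        = -(S 0 * S 0 + S 1 * S 1 + S 2 * S 2) from by abel,
      hcas]
    rw [smul_neg, smul_smul, smul_neg, neg_smul, neg_neg, smul_smul]
    convert one_smul ℂ (1 : Matrix (Fin N) (Fin N) ℂ) using 2
    rw [← sq, hr2]
    field_simp
  · -- part 2
    rw [Matrix.trace_one]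
    simp only [Fintype.card_fin, Complex.natCast_re]
    ring
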